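/- Consider the planar ODE ẋ = x(1−x)(3y−2), ẏ = y(1−y)(3x−2) on (0,1)². For every solution (x(t), y(t)) : [0,∞) → (0,1)² whose initial condition satisfies y(0) < (1/2)(1 − x(0) + √(1 + 2x(0) − 3x(0)²)), we have (x(t), y(t)) → (0,0) as t → ∞. -/

import Mathlib

open Filter Topology Set

/-- A function with vanishing derivative on `[0,∞)` is constant there. -/
lemma stagAux_const_of_deriv_zero {f : ℝ → ℝ}
    (hf : ∀ t : ℝ, 0 ≤ t → HasDerivAt f 0 t) {t : ℝ} (ht : 0 ≤ t) : f t = f 0 := by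
  have hcont : ContinuousOn f (Icc 0 t) :=
    fun s hs => ((hf s hs.1).continuousAt).continuousWithinAt
  have hderiv : ∀ s ∈ Ico (0:ℝ) t, HasDerivWithinAt f 0 (Ici s) s :=
    fun s hs => (hf s hs.1).hasDerivWithinAt
  exact constant_of_has_deriv_right_zero hcont hderiv t (right_mem_Icc.2 ht)

/-- Representation of solutions of the scalar linear ODE `v' = g v` on `[0,∞)`. -/
lemma stagAux_linear_ode {v g : ℝ → ℝ} (hg : Continuous g)
    (hv : ∀ t : ℝ, 0 ≤ t → HasDerivAt v (g t * v t) t) {t : ℝ} (ht : 0 ≤ t) :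
    v t = v 0 * Real.exp (∫ s in (0:ℝ)..t, g s) := by
  set G : ℝ → ℝ := fun u => ∫ s in (0:ℝ)..u, g s with hGdef
  have hG : ∀ u : ℝ, HasDerivAt G (g u) u :=
    fun u => (hg.integral_hasStrictDerivAt 0 u).hasDerivAt
  have hE : ∀ s : ℝ, 0 ≤ s → HasDerivAt (fun u => v u * Real.exp (-G u)) 0 s := by
    intro s hs
    have hexp : HasDerivAt (fun u => Real.exp (-G u)) (Real.exp (-G s) * (-g s)) s := by
      have := (Real.hasDerivAt_exp (-G s)).comp s ((hG s).neg)
      simpa [Function.comp_def] using this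
    have := (hv s hs).mul hexp
    have hz : g s * v s * Real.exp (-G s) + v s * (Real.exp (-G s) * (-g s)) = 0 := by ring
    rw [hz] at this
    exact this
  have hc := stagAux_const_of_deriv_zero hE ht
  have hG0 : G 0 = 0 := intervalIntegral.integral_same
  have h1 : v t * Real.exp (-G t) = v 0 := by simpa [hG0] using hc
  have := congrArg (fun z => z * Real.exp (G t)) h1
  simpa [mul_assoc, ← Real.exp_add] using this

/-- An eventually-antitone function bounded below converges. -/
lemma stagAux_tendsto_of_antitone {f : ℝ → ℝ} {T m : ℝ}
    (hmono : ∀ s t : ℝ, T ≤ s → s ≤ t → f t ≤ f s)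
    (hbd : ∀ t : ℝ, T ≤ t → m ≤ f t) :
    ∃ l, m ≤ l ∧ (∀ t, T ≤ t → l ≤ f t) ∧ Tendsto f atTop (𝓝 l) := by
  have hne : (f '' Ici T).Nonempty := ⟨f T, ⟨T, le_refl T, rfl⟩⟩
  have hbb : BddBelow (f '' Ici T) := ⟨m, by rintro v ⟨s, hs, rfl⟩; exact hbd s hs⟩
  set l := sInf (f '' Ici T) with hl
  have hml : m ≤ l := le_csInf hne (by rintro v ⟨s, hs, rfl⟩; exact hbd s hs)
  have hlle : ∀ t, T ≤ t → l ≤ f t := fun t ht => csInf_le hbb ⟨t, ht, rfl⟩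
  refine ⟨l, hml, hlle, ?_⟩
  rw [tendsto_order]
  constructor
  · intro a ha
    filter_upwards [eventually_ge_atTop T] with t ht
    exact lt_of_lt_of_le ha (hlle t ht)
  · intro a ha
    obtain ⟨v, ⟨s, hs, rfl⟩, hv⟩ := exists_lt_of_csInf_lt hne ha
    filter_upwards [eventually_ge_atTop s] with t ht
    exact lt_of_le_of_lt (hmono s t hs ht) hv

/-- If `f` converges and its derivative converges, the derivative limit is zero. -/
lemma stagAux_deriv_limit_zero {f F : ℝ → ℝ} {l L : ℝ}
    (hd : ∀ t : ℝ, 0 ≤ t → HasDerivAt f (F t) t)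
    (hf : Tendsto f atTop (𝓝 l)) (hF : Tendsto F atTop (𝓝 L)) : L = 0 := by
  have key : ∀ (f F : ℝ → ℝ) (l L : ℝ), (∀ t : ℝ, 0 ≤ t → HasDerivAt f (F t) t) →
      Tendsto f atTop (𝓝 l) → Tendsto F atTop (𝓝 L) → 0 < L → False := by
    intro f F l L hd hf hF hL
    have hev : ∀ᶠ t in atTop, L / 2 ≤ F t :=
      hF.eventually (eventually_ge_nhds (by linarith : L / 2 < L))
    obtain ⟨T0, hT0⟩ := eventually_atTop.1 hev
    set T := max T0 0 with hT
    have hTnn : (0:ℝ) ≤ T := le_max_right _ _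
    have hmono : MonotoneOn (fun t => f t - L / 2 * t) (Ici T) := by
      apply monotoneOn_of_deriv_nonneg (convex_Ici T)
      · intro s hs
        exact (((hd s (hTnn.trans hs)).continuousAt).sub
          ((continuous_const.mul continuous_id).continuousAt)).continuousWithinAt
      · rw [interior_Ici]
        intro s hs
        have := (hd s (hTnn.trans hs.le)).sub
          ((hasDerivAt_id s).const_mul (L / 2))
        exact this.differentiableAt.differentiableWithinAt
      · rw [interior_Ici]
        intro s hs
        have hds : HasDerivAt (fun t => f t - L / 2 * t) (F s - L / 2 * 1) s :=
          (hd s (hTnn.trans hs.le)).sub ((hasDerivAt_id s).const_mul (L / 2))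
        rw [hds.deriv]
        have := hT0 s ((le_max_left _ _).trans hs.le)
        linarith
    have hgrow : ∀ t : ℝ, T ≤ t → L / 2 * t + (f T - L / 2 * T) ≤ f t := by
      intro t ht
      have := hmono (mem_Ici.2 (le_refl T)) (mem_Ici.2 ht) ht
      simp only at this
      linarith
    have htop : Tendsto f atTop atTop := by
      apply tendsto_atTop_mono' _ _
        (tendsto_atTop_add_const_right atTop (f T - L / 2 * T)
          (Tendsto.const_mul_atTop (by linarith : (0:ℝ) < L / 2) tendsto_id))
      filter_upwards [eventually_ge_atTop T] with t ht
      exact hgrow t ht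
    exact not_tendsto_nhds_of_tendsto_atTop htop l hf
  rcases lt_trichotomy L 0 with h | h | h
  · exact absurd (key (fun t => -f t) (fun t => -F t) (-l) (-L)
      (fun t ht => (hd t ht).neg) hf.neg hF.neg (by linarith)) (fun h => h)
  · exact h
  · exact absurd (key f F l L hd hf hF h) (fun h => h)


lemma stagAux_monoOn {f F : ℝ → ℝ} {T : ℝ} (hT : 0 ≤ T)
    (hd : ∀ t : ℝ, 0 ≤ t → HasDerivAt f (F t) t)
    (hF : ∀ t : ℝ, T ≤ t → 0 ≤ F t) : MonotoneOn f (Ici T) := by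
  apply monotoneOn_of_deriv_nonneg (convex_Ici T)
  · exact fun s hs => ((hd s (hT.trans hs)).continuousAt).continuousWithinAt
  · rw [interior_Ici]
    exact fun s hs => ((hd s (hT.trans hs.le)).differentiableAt).differentiableWithinAt
  · rw [interior_Ici]
    intro s hs
    rw [(hd s (hT.trans hs.le)).deriv]
    exact hF s hs.le

lemma stagAux_antiOn {f F : ℝ → ℝ} {T : ℝ} (hT : 0 ≤ T)
    (hd : ∀ t : ℝ, 0 ≤ t → HasDerivAt f (F t) t)
    (hF : ∀ t : ℝ, T ≤ t → F t ≤ 0) : AntitoneOn f (Ici T) := by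
  apply antitoneOn_of_deriv_nonpos (convex_Ici T)
  · exact fun s hs => ((hd s (hT.trans hs)).continuousAt).continuousWithinAt
  · rw [interior_Ici]
    exact fun s hs => ((hd s (hT.trans hs.le)).differentiableAt).differentiableWithinAt
  · rw [interior_Ici]
    intro s hs
    rw [(hd s (hT.trans hs.le)).deriv]
    exact hF s hs.le


/-- If `x` stays below `2/3` and `y` stays above `2/3` for all positive times, then
the conserved quantity forces `y²(1-y) = x²(1-x)` at time `0`. -/
lemma stagAux_forever (x y : ℝ → ℝ)
    (hmem : ∀ t : ℝ, 0 ≤ t → x t ∈ Ioo (0:ℝ) 1 ∧ y t ∈ Ioo (0:ℝ) 1)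
    (hx : ∀ t : ℝ, 0 ≤ t → HasDerivAt x (x t * (1 - x t) * (3 * y t - 2)) t)
    (hy : ∀ t : ℝ, 0 ≤ t → HasDerivAt y (y t * (1 - y t) * (3 * x t - 2)) t)
    (hxlt : ∀ t : ℝ, 0 ≤ t → x t < 2/3)
    (hyge : ∀ t : ℝ, 0 ≤ t → 2/3 ≤ y t) :
    (y 0)^2 * (1 - y 0) = (x 0)^2 * (1 - x 0) := by
  -- x is monotone, y is antitone
  have hxmono : MonotoneOn x (Ici 0) := by
    apply stagAux_monoOn le_rfl hx
    intro t ht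
    have h1 := (hmem t ht).1
    have h2 := hyge t ht
    have : 0 ≤ x t * (1 - x t) := mul_nonneg h1.1.le (by linarith [h1.2])
    exact mul_nonneg this (by linarith)
  have hyanti : AntitoneOn y (Ici 0) := by
    apply stagAux_antiOn le_rfl hy
    intro t ht
    have h1 := (hmem t ht).2
    have h2 := hxlt t ht
    have h0 : 0 ≤ y t * (1 - y t) := mul_nonneg h1.1.le (by linarith [h1.2])
    have : 3 * x t - 2 ≤ 0 := by linarith
    exact mul_nonpos_of_nonneg_of_nonpos h0 this
  -- limits
  obtain ⟨la, hla1, hla2, hla3⟩ := stagAux_tendsto_of_antitone (f := fun t => -x t) (T := 0)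
      (m := -(2/3))
      (fun s t hs hst => neg_le_neg (hxmono (mem_Ici.2 hs) (mem_Ici.2 (hs.trans hst)) hst))
      (fun t ht => by simpa using (hxlt t ht).le)
  set a : ℝ := -la with ha
  have hxa : Tendsto x atTop (𝓝 a) := by
    have := hla3.neg
    simpa using this
  have ha23 : a ≤ 2/3 := by simpa [ha] using neg_le_neg hla1
  have hxle : ∀ t : ℝ, 0 ≤ t → x t ≤ a := by
    intro t ht
    have := hla2 t ht
    simpa [ha] using neg_le_neg this
  have ha0 : 0 < a := lt_of_lt_of_le (hmem 0 le_rfl).1.1 (hxle 0 le_rfl)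
  obtain ⟨b, hb1, hb2, hyb⟩ := stagAux_tendsto_of_antitone (f := y) (T := 0) (m := 2/3)
      (fun s t hs hst => hyanti (mem_Ici.2 hs) (mem_Ici.2 (hs.trans hst)) hst)
      hyge
  have hb0 : b ≤ y 0 := hb2 0 le_rfl
  have hby1 : b < 1 := lt_of_le_of_lt hb0 (hmem 0 le_rfl).2.2
  -- limits of the derivatives are zero
  have hFx : Tendsto (fun t => x t * (1 - x t) * (3 * y t - 2)) atTop
      (𝓝 (a * (1 - a) * (3 * b - 2))) :=
    (hxa.mul (tendsto_const_nhds.sub hxa)).mul ((hyb.const_mul 3).sub_const 2)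
  have hFy : Tendsto (fun t => y t * (1 - y t) * (3 * x t - 2)) atTop
      (𝓝 (b * (1 - b) * (3 * a - 2))) :=
    (hyb.mul (tendsto_const_nhds.sub hyb)).mul ((hxa.const_mul 3).sub_const 2)
  have hLx : a * (1 - a) * (3 * b - 2) = 0 := stagAux_deriv_limit_zero hx hxa hFx
  have hLy : b * (1 - b) * (3 * a - 2) = 0 := stagAux_deriv_limit_zero hy hyb hFy
  -- hence a = b = 2/3
  have ha23' : a = 2/3 := by
    rcases mul_eq_zero.1 hLy with h | h
    · rcases mul_eq_zero.1 h with h' | h'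
      · nlinarith
      · nlinarith
    · linarith
  have hb23 : b = 2/3 := by
    rcases mul_eq_zero.1 hLx with h | h
    · rcases mul_eq_zero.1 h with h' | h'
      · nlinarith
      · nlinarith
    · linarith
  -- the quantity D = y²(1-y) - x²(1-x) satisfies D' = g D with g ≥ 0
  set D : ℝ → ℝ := fun t => (y t)^2 * (1 - y t) - (x t)^2 * (1 - x t) with hD
  set g : ℝ → ℝ := fun s => -(3 * x (max 0 s) - 2) * (3 * y (max 0 s) - 2) with hg
  have hcx : ContinuousOn x (Ici 0) := fun t ht => ((hx t ht).continuousAt).continuousWithinAt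
  have hcy : ContinuousOn y (Ici 0) := fun t ht => ((hy t ht).continuousAt).continuousWithinAt
  have hpc : Continuous fun s : ℝ => max 0 s := continuous_const.max continuous_id
  have hxc : Continuous fun s : ℝ => x (max 0 s) :=
    hcx.comp_continuous hpc fun s => le_max_left 0 s
  have hyc : Continuous fun s : ℝ => y (max 0 s) :=
    hcy.comp_continuous hpc fun s => le_max_left 0 s
  have hgc : Continuous g := by
    apply Continuous.mul
    · exact ((continuous_const.mul hxc).sub continuous_const).neg
    · exact (continuous_const.mul hyc).sub continuous_const
  have hDd : ∀ t : ℝ, 0 ≤ t → HasDerivAt D (g t * D t) t := by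
    intro t ht
    have h1 := (((hy t ht).pow 2).mul ((hasDerivAt_const t (1:ℝ)).sub (hy t ht))).sub
      (((hx t ht).pow 2).mul ((hasDerivAt_const t (1:ℝ)).sub (hx t ht)))
    convert h1 using 1
    · rfl
    · rfl
    · rfl
    have hmax : max (0:ℝ) t = t := max_eq_right ht
    simp only [hg, hD, hmax, Pi.sub_apply, Pi.pow_apply]
    push_cast
    ring
  have hgnn : ∀ s : ℝ, 0 ≤ g s := by
    intro s
    have h1 := hxlt (max 0 s) (le_max_left 0 s)
    have h2 := hyge (max 0 s) (le_max_left 0 s)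
    have : (0:ℝ) ≤ -(3 * x (max 0 s) - 2) := by linarith
    exact mul_nonneg this (by linarith)
  have hrepr : ∀ t : ℝ, 0 ≤ t → D t = D 0 * Real.exp (∫ s in (0:ℝ)..t, g s) :=
    fun t ht => stagAux_linear_ode hgc hDd ht
  have habs : ∀ t : ℝ, 0 ≤ t → |D 0| ≤ |D t| := by
    intro t ht
    have hint : 0 ≤ ∫ s in (0:ℝ)..t, g s :=
      intervalIntegral.integral_nonneg ht (fun s _ => hgnn s)
    have hexp : 1 ≤ Real.exp (∫ s in (0:ℝ)..t, g s) := Real.one_le_exp hint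
    rw [hrepr t ht, abs_mul, abs_of_pos (lt_of_lt_of_le one_pos hexp)]
    nlinarith [abs_nonneg (D 0)]
  -- D tends to 0
  have hDlim : Tendsto D atTop (𝓝 ((b)^2 * (1 - b) - (a)^2 * (1 - a))) := by
    apply Tendsto.sub
    · exact (hyb.pow 2).mul (tendsto_const_nhds.sub hyb)
    · exact (hxa.pow 2).mul (tendsto_const_nhds.sub hxa)
  have hzero : (b)^2 * (1 - b) - (a)^2 * (1 - a) = 0 := by rw [ha23', hb23]; ring
  rw [hzero] at hDlim
  have : |D 0| ≤ 0 := by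
    have habs' : Tendsto (fun t => |D t|) atTop (𝓝 |(0:ℝ)|) := hDlim.abs
    simp only [abs_zero] at habs'
    refine ge_of_tendsto habs' ?_
    filter_upwards [eventually_ge_atTop (0:ℝ)] with t ht
    exact habs t ht
  have hD0 : D 0 = 0 := abs_eq_zero.1 (le_antisymm this (abs_nonneg _))
  have := hD0
  simp only [hD] at this
  linarith

/-- **Stag Hunt, region of attraction of (Hare,Hare).**
For the projected replicator dynamics of the Stag Hunt game,
`ẋ = x(1-x)(3y-2)`, `ẏ = y(1-y)(3x-2)` on `(0,1)²`, every solution whose initial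
condition lies strictly below the curve
`y = (1/2)(1 - x + √(1 + 2x - 3x²))` converges to `(0,0)` (i.e. to (Hare,Hare)). -/
theorem stagHunt_below_curve_tendsto_hare
    (x y : ℝ → ℝ)
    (hmem : ∀ t : ℝ, 0 ≤ t → x t ∈ Ioo (0:ℝ) 1 ∧ y t ∈ Ioo (0:ℝ) 1)
    (hx : ∀ t : ℝ, 0 ≤ t →
      HasDerivAt x (x t * (1 - x t) * (3 * y t - 2)) t)
    (hy : ∀ t : ℝ, 0 ≤ t →
      HasDerivAt y (y t * (1 - y t) * (3 * x t - 2)) t)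
    (h0 : y 0 < (1/2) * (1 - x 0 + Real.sqrt (1 + 2 * x 0 - 3 * (x 0)^2))) :
    Tendsto (fun t => (x t, y t)) atTop (𝓝 ((0:ℝ), (0:ℝ))) := by
  have hcx : ContinuousOn x (Ici 0) := fun t ht => ((hx t ht).continuousAt).continuousWithinAt
  have hcy : ContinuousOn y (Ici 0) := fun t ht => ((hy t ht).continuousAt).continuousWithinAt
  have hpc : Continuous fun s : ℝ => max 0 s := continuous_const.max continuous_id
  have hxc : Continuous fun s : ℝ => x (max 0 s) :=
    hcx.comp_continuous hpc fun s => le_max_left 0 s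
  have hyc : Continuous fun s : ℝ => y (max 0 s) :=
    hcy.comp_continuous hpc fun s => le_max_left 0 s
  -- the quantity Q = x² + xy + y² - x - y is negative at time 0
  set Q : ℝ → ℝ := fun t => (x t)^2 + x t * y t + (y t)^2 - x t - y t with hQdef
  have hQ0 : Q 0 < 0 := by
    obtain ⟨hx0, hy0⟩ := hmem 0 le_rfl
    set s := Real.sqrt (1 + 2 * x 0 - 3 * (x 0)^2) with hs
    have hsnn : 0 ≤ s := Real.sqrt_nonneg _
    have hs2 : s^2 = 1 + 2 * x 0 - 3 * (x 0)^2 := by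
      rw [hs, Real.sq_sqrt]; nlinarith [hx0.1, hx0.2]
    have hsge : 1 - x 0 ≤ s := by nlinarith [hx0.1, hx0.2]
    have hA : 2 * y 0 - 1 + x 0 - s < 0 := by linarith
    have hB : 0 < 2 * y 0 - 1 + x 0 + s := by linarith [hy0.1]
    have := mul_neg_of_neg_of_pos hA hB
    simp only [hQdef]
    nlinarith [this, hs2]
  -- Q remains negative
  set gQ : ℝ → ℝ := fun u =>
    4 * x (max 0 u) + 4 * y (max 0 u) - 6 * (x (max 0 u) * y (max 0 u)) - 2 with hgQ
  have hgQc : Continuous gQ := by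
    apply Continuous.sub
    apply Continuous.sub
    apply Continuous.add
    · exact continuous_const.mul hxc
    · exact continuous_const.mul hyc
    · exact continuous_const.mul (hxc.mul hyc)
    · exact continuous_const
  have hQd : ∀ t : ℝ, 0 ≤ t → HasDerivAt Q (gQ t * Q t) t := by
    intro t ht
    have h1 := (((((hx t ht).pow 2).add ((hx t ht).mul (hy t ht))).add
      ((hy t ht).pow 2)).sub (hx t ht)).sub (hy t ht)
    convert h1 using 1
    · rfl
    · rfl
    · rfl
    have hmax : max (0:ℝ) t = t := max_eq_right ht
    simp only [hgQ, hQdef, hmax]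
    push_cast
    ring
  have hQneg : ∀ t : ℝ, 0 ≤ t → Q t < 0 := by
    intro t ht
    rw [stagAux_linear_ode hgQc hQd ht]
    exact mul_neg_of_neg_of_pos hQ0 (Real.exp_pos _)
  -- x and y are never simultaneously ≥ 2/3
  have hnotboth : ∀ t : ℝ, 0 ≤ t → ¬(2/3 ≤ x t ∧ 2/3 ≤ y t) := by
    rintro t ht ⟨h1, h2⟩
    have := hQneg t ht
    simp only [hQdef] at this
    nlinarith [mul_nonneg (by linarith : (0:ℝ) ≤ x t - 2/3) (by linarith : (0:ℝ) ≤ y t - 2/3),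
      sq_nonneg (x t - 2/3), sq_nonneg (y t - 2/3)]
  -- main case split: does the solution ever enter the square (0,2/3)² ?
  by_cases hT : ∃ T : ℝ, 0 ≤ T ∧ x T < 2/3 ∧ y T < 2/3
  · -- once inside, the solution stays inside and converges to (0,0)
    obtain ⟨T, hT0, hxT, hyT⟩ := hT
    -- R = (2-3x)(2-3y) is nondecreasing
    set R : ℝ → ℝ := fun t => (2 - 3 * x t) * (2 - 3 * y t) with hRdef
    set FR : ℝ → ℝ := fun t =>
      3 * x t * (1 - x t) * (2 - 3 * y t)^2 + 3 * y t * (1 - y t) * (2 - 3 * x t)^2 with hFR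
    have hRd : ∀ t : ℝ, 0 ≤ t → HasDerivAt R (FR t) t := by
      intro t ht
      have h1 := ((hasDerivAt_const t (2:ℝ)).sub ((hx t ht).const_mul 3)).mul
        ((hasDerivAt_const t (2:ℝ)).sub ((hy t ht).const_mul 3))
      convert h1 using 1
      · rfl
      · rfl
      · rfl
      simp only [hFR, Pi.sub_apply]
      ring
    have hFRnn : ∀ t : ℝ, 0 ≤ t → 0 ≤ FR t := by
      intro t ht
      obtain ⟨hx1, hy1⟩ := hmem t ht
      simp only [hFR]
      have e1 : 0 ≤ 3 * x t * (1 - x t) := by nlinarith [hx1.1, hx1.2]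
      have e2 : 0 ≤ 3 * y t * (1 - y t) := by nlinarith [hy1.1, hy1.2]
      nlinarith [sq_nonneg (2 - 3 * y t), sq_nonneg (2 - 3 * x t)]
    have hRmono : MonotoneOn R (Ici T) := stagAux_monoOn hT0 hRd (fun t ht => hFRnn t (hT0.trans ht))
    have hRT : 0 < R T := by simp only [hRdef]; nlinarith
    -- the square is invariant
    have hstay : ∀ t : ℝ, T ≤ t → x t < 2/3 ∧ y t < 2/3 := by
      intro t ht
      have ht0 : 0 ≤ t := hT0.trans ht
      have hRt : 0 < R t := lt_of_lt_of_le hRT (hRmono (mem_Ici.2 le_rfl) (mem_Ici.2 ht) ht)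
      simp only [hRdef] at hRt
      have hxlt : x t < 2/3 := by
        by_contra hxc'
        push_neg at hxc'
        have hyl : y t < 2/3 := by
          by_contra hyc'
          push_neg at hyc'
          exact hnotboth t ht0 ⟨hxc', hyc'⟩
        nlinarith
      constructor
      · exact hxlt
      · nlinarith
    -- both coordinates are nonincreasing from time T on
    have hxanti : AntitoneOn x (Ici T) := by
      apply stagAux_antiOn hT0 hx
      intro t ht
      have ht0 : 0 ≤ t := hT0.trans ht
      obtain ⟨hx1, _⟩ := hmem t ht0
      have := (hstay t ht).2
      have h1 : 0 ≤ x t * (1 - x t) := mul_nonneg hx1.1.le (by linarith [hx1.2])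
      exact mul_nonpos_of_nonneg_of_nonpos h1 (by linarith)
    have hyanti : AntitoneOn y (Ici T) := by
      apply stagAux_antiOn hT0 hy
      intro t ht
      have ht0 : 0 ≤ t := hT0.trans ht
      obtain ⟨_, hy1⟩ := hmem t ht0
      have := (hstay t ht).1
      have h1 : 0 ≤ y t * (1 - y t) := mul_nonneg hy1.1.le (by linarith [hy1.2])
      exact mul_nonpos_of_nonneg_of_nonpos h1 (by linarith)
    -- limits
    obtain ⟨a, ha0, ha2, hxa⟩ := stagAux_tendsto_of_antitone (f := x) (T := T) (m := 0)
      (fun s t hs hst => hxanti (mem_Ici.2 hs) (mem_Ici.2 (hs.trans hst)) hst)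
      (fun t ht => (hmem t (hT0.trans ht)).1.1.le)
    obtain ⟨b, hb0, hb2, hyb⟩ := stagAux_tendsto_of_antitone (f := y) (T := T) (m := 0)
      (fun s t hs hst => hyanti (mem_Ici.2 hs) (mem_Ici.2 (hs.trans hst)) hst)
      (fun t ht => (hmem t (hT0.trans ht)).2.1.le)
    have ha23 : a < 2/3 := lt_of_le_of_lt (ha2 T le_rfl) hxT
    have hb23 : b < 2/3 := lt_of_le_of_lt (hb2 T le_rfl) hyT
    have hFx : Tendsto (fun t => x t * (1 - x t) * (3 * y t - 2)) atTop
        (𝓝 (a * (1 - a) * (3 * b - 2))) :=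
      (hxa.mul (tendsto_const_nhds.sub hxa)).mul ((hyb.const_mul 3).sub_const 2)
    have hFy : Tendsto (fun t => y t * (1 - y t) * (3 * x t - 2)) atTop
        (𝓝 (b * (1 - b) * (3 * a - 2))) :=
      (hyb.mul (tendsto_const_nhds.sub hyb)).mul ((hxa.const_mul 3).sub_const 2)
    have hLx : a * (1 - a) * (3 * b - 2) = 0 := stagAux_deriv_limit_zero hx hxa hFx
    have hLy : b * (1 - b) * (3 * a - 2) = 0 := stagAux_deriv_limit_zero hy hyb hFy
    have ha' : a = 0 := by
      rcases mul_eq_zero.1 hLx with h | h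
      · rcases mul_eq_zero.1 h with h' | h'
        · exact h'
        · linarith
      · linarith
    have hb' : b = 0 := by
      rcases mul_eq_zero.1 hLy with h | h
      · rcases mul_eq_zero.1 h with h' | h'
        · exact h'
        · linarith
      · linarith
    rw [ha'] at hxa
    rw [hb'] at hyb
    exact hxa.prodMk_nhds hyb
  · -- otherwise one coordinate would stay ≥ 2/3 forever, contradicting conservation
    exfalso
    have hbig : ∀ t : ℝ, 0 ≤ t → 2/3 ≤ x t ∨ 2/3 ≤ y t := by
      intro t ht
      by_contra h
      push_neg at h
      exact hT ⟨t, ht, h.1, h.2⟩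
    by_cases hax : ∀ t : ℝ, 0 ≤ t → x t < 2/3
    · have hyge : ∀ t : ℝ, 0 ≤ t → 2/3 ≤ y t :=
        fun t ht => (hbig t ht).resolve_left (not_le.2 (hax t ht))
      have hD0 := stagAux_forever x y hmem hx hy hax hyge
      have hyx : x 0 < y 0 := lt_of_lt_of_le (hax 0 le_rfl) (hyge 0 le_rfl)
      have hprod : (y 0 - x 0) * Q 0 < 0 := mul_neg_of_pos_of_neg (by linarith) hQ0
      simp only [hQdef] at hprod
      nlinarith [hD0, hprod]
    · push_neg at hax
      obtain ⟨t₁, ht₁0, ht₁⟩ := hax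
      have hxt₁ : 2/3 ≤ x t₁ := ht₁
      by_cases hay : ∀ t : ℝ, 0 ≤ t → y t < 2/3
      · have hxge : ∀ t : ℝ, 0 ≤ t → 2/3 ≤ x t :=
          fun t ht => (hbig t ht).resolve_right (not_le.2 (hay t ht))
        have hD0 := stagAux_forever y x (fun t ht => ⟨(hmem t ht).2, (hmem t ht).1⟩) hy hx hay hxge
        have hyx : y 0 < x 0 := lt_of_lt_of_le (hay 0 le_rfl) (hxge 0 le_rfl)
        have hprod : (x 0 - y 0) * Q 0 < 0 := mul_neg_of_pos_of_neg (by linarith) hQ0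
        simp only [hQdef] at hprod
        nlinarith [hD0, hprod]
      · push_neg at hay
        obtain ⟨t₂, ht₂0, ht₂⟩ := hay
        have hyt₂ : 2/3 ≤ y t₂ := ht₂
        -- intermediate value: at some time t₃ we have x t₃ = y t₃
        have hsub : uIcc t₁ t₂ ⊆ Ici (0:ℝ) := by
          intro s hs
          have := hs.1
          rcases le_total t₁ t₂ with h | h
          · simp only [uIcc_of_le h] at hs; exact le_trans ht₁0 hs.1
          · simp only [uIcc_of_ge h] at hs; exact le_trans ht₂0 hs.1
        have hg : ContinuousOn (fun t => x t - y t) (uIcc t₁ t₂) :=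
          ((hcx.mono hsub).sub (hcy.mono hsub))
        have hyt₁ : y t₁ < 2/3 := by
          by_contra h
          exact hnotboth t₁ ht₁0 ⟨hxt₁, not_lt.1 h⟩
        have hxt₂ : x t₂ < 2/3 := by
          by_contra h
          exact hnotboth t₂ ht₂0 ⟨not_lt.1 h, hyt₂⟩
        have hmem0 : (0:ℝ) ∈ uIcc (x t₁ - y t₁) (x t₂ - y t₂) := by
          rw [mem_uIcc]
          right
          constructor
          · linarith
          · linarith
        obtain ⟨t₃, ht₃mem, ht₃⟩ := intermediate_value_uIcc hg hmem0
        have ht₃0 : 0 ≤ t₃ := hsub ht₃mem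
        have hxy : x t₃ = y t₃ := by linarith [sub_eq_zero.1 ht₃]
        rcases hbig t₃ ht₃0 with h | h
        · exact hnotboth t₃ ht₃0 ⟨h, hxy ▸ h⟩
        · exact hnotboth t₃ ht₃0 ⟨hxy ▸ h, h⟩
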